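/- arXiv:1807.03344 — 5 statements merged into one kernel-verified Lean document; each statement's English description precedes it below -/
import Mathlib

section
/- With γ, τ, n, N > 0 and g(U) = (1/(2γ))(−U(τ+2γ) + √(U²(τ²+4γτ) + 4UnNγ²)), one has g'(nN) = −γ/(τ+2γ) and lim_{U→0⁺} g'(U) = +∞; hence g' has a unique root in (0, nN). -/
open Filter

theorem g_deriv_properties
    (γ τ n N : ℝ) (hγ : 0 < γ) (hτ : 0 < τ) (hn : 0 < n) (hN : 0 < N)
    (g : ℝ → ℝ)
    (hg : ∀ U, g U = (1 / (2 * γ)) *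
      (-(U * (τ + 2 * γ)) + Real.sqrt (U ^ 2 * (τ ^ 2 + 4 * γ * τ) + 4 * U * n * N * γ ^ 2))) :
    deriv g (n * N) = -γ / (τ + 2 * γ) ∧
    Filter.Tendsto (deriv g) (nhdsWithin 0 (Set.Ioi 0)) Filter.atTop ∧
    (∃! U : ℝ, U ∈ Set.Ioo 0 (n * N) ∧ deriv g U = 0) := by
  have hgf : g = fun U => (1 / (2 * γ)) *
      (-(U * (τ + 2 * γ)) + Real.sqrt (U ^ 2 * (τ ^ 2 + 4 * γ * τ) + 4 * U * n * N * γ ^ 2)) :=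
    funext hg
  set S : ℝ → ℝ := fun U => U ^ 2 * (τ ^ 2 + 4 * γ * τ) + 4 * U * n * N * γ ^ 2 with hS
  set φ : ℝ → ℝ := fun U => (1 / (2 * γ)) *
      (-(τ + 2 * γ) + (2 * U * (τ ^ 2 + 4 * γ * τ) + 4 * n * N * γ ^ 2) / (2 * Real.sqrt (S U)))
    with hφ
  have hSpos : ∀ U : ℝ, 0 < U → 0 < S U := by
    intro U hU
    have : 0 < U ^ 2 * (τ ^ 2 + 4 * γ * τ) := by positivity
    have h2 : 0 < 4 * U * n * N * γ ^ 2 := by positivity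
    simp only [hS]; linarith
  -- derivative formula
  have key : ∀ U : ℝ, 0 < U → HasDerivAt g (φ U) U := by
    intro U hU
    have hs : S U ≠ 0 := (hSpos U hU).ne'
    have hq : HasDerivAt S (2 * U * (τ ^ 2 + 4 * γ * τ) + 4 * n * N * γ ^ 2) U := by
      have h1 : HasDerivAt (fun x : ℝ => x ^ 2 * (τ ^ 2 + 4 * γ * τ) + 4 * x * n * N * γ ^ 2)
          (2 * U * (τ ^ 2 + 4 * γ * τ) + 4 * n * N * γ ^ 2) U := by
        have h2 := ((hasDerivAt_pow 2 U).mul_const (τ ^ 2 + 4 * γ * τ)).add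
          ((hasDerivAt_id' (x := U)).mul_const (4 * n * N * γ ^ 2))
        refine (h2.congr_deriv (by push_cast; ring)).congr_of_eventuallyEq
          (Filter.Eventually.of_forall fun x => ?_)
        simp only [Pi.add_apply]; ring
      exact h1
    have hsq : HasDerivAt (fun x => Real.sqrt (S x))
        (1 / (2 * Real.sqrt (S U)) * (2 * U * (τ ^ 2 + 4 * γ * τ) + 4 * n * N * γ ^ 2)) U :=
      (Real.hasDerivAt_sqrt hs).comp U hq
    have hlin : HasDerivAt (fun x : ℝ => -(x * (τ + 2 * γ))) (-(τ + 2 * γ)) U := by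
      exact ((hasDerivAt_id U).mul_const (τ + 2 * γ)).neg.congr_deriv (by ring)
    have := (hlin.add hsq).const_mul (1 / (2 * γ))
    rw [hgf]
    exact this.congr_deriv (by simp only [hφ]; ring)
  have hc : (0:ℝ) < τ + 2 * γ := by linarith
  have hnN : (0:ℝ) < n * N := by positivity
  constructor
  · -- deriv at n*N
    have hd := (key (n * N) hnN).deriv
    rw [hd]
    simp only [hφ]
    have hval : S (n * N) = ((n * N) * (τ + 2 * γ)) ^ 2 := by simp only [hS]; ring
    rw [hval, Real.sqrt_sq (by positivity)]
    have h1 : (2 : ℝ) * γ ≠ 0 := by positivity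
    have h2 : (2 : ℝ) * ((n * N) * (τ + 2 * γ)) ≠ 0 := by positivity
    field_simp
    ring
  constructor
  · -- tendsto atTop
    have hcong : ∀ᶠ x in nhdsWithin 0 (Set.Ioi 0), φ x = deriv g x := by
      filter_upwards [self_mem_nhdsWithin] with x hx
      exact ((key x hx).deriv).symm
    refine Tendsto.congr' hcong ?_
    have hScont : Continuous S := by fun_prop
    have hs0 : Tendsto (fun x => 2 * Real.sqrt (S x)) (nhdsWithin 0 (Set.Ioi 0))
        (nhdsWithin 0 (Set.Ioi 0)) := by
      rw [tendsto_nhdsWithin_iff]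
      constructor
      · have : Tendsto (fun x => 2 * Real.sqrt (S x)) (nhds 0) (nhds (2 * Real.sqrt (S 0))) :=
          ((continuous_const.mul (Real.continuous_sqrt.comp hScont)).tendsto 0)
        have h0 : S 0 = 0 := by simp [hS]
        rw [h0, Real.sqrt_zero, mul_zero] at this
        exact this.mono_left nhdsWithin_le_nhds
      · filter_upwards [self_mem_nhdsWithin] with x hx
        have := hSpos x hx
        have : 0 < Real.sqrt (S x) := Real.sqrt_pos.mpr this
        exact Set.mem_Ioi.mpr (by linarith)
    have hinv : Tendsto (fun x => (2 * Real.sqrt (S x))⁻¹) (nhdsWithin 0 (Set.Ioi 0)) atTop :=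
      tendsto_inv_nhdsGT_zero.comp hs0
    have hm : Tendsto (fun x => 2 * x * (τ ^ 2 + 4 * γ * τ) + 4 * n * N * γ ^ 2)
        (nhdsWithin 0 (Set.Ioi 0)) (nhds (4 * n * N * γ ^ 2)) := by
      have : Continuous (fun x : ℝ => 2 * x * (τ ^ 2 + 4 * γ * τ) + 4 * n * N * γ ^ 2) := by
        fun_prop
      have h := (this.tendsto 0).mono_left (nhdsWithin_le_nhds (s := Set.Ioi (0:ℝ)))
      simpa using h
    have hdiv : Tendsto (fun x => (2 * x * (τ ^ 2 + 4 * γ * τ) + 4 * n * N * γ ^ 2) *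
        (2 * Real.sqrt (S x))⁻¹) (nhdsWithin 0 (Set.Ioi 0)) atTop :=
      hm.pos_mul_atTop (by positivity) hinv
    have hadd : Tendsto (fun x => -(τ + 2 * γ) + (2 * x * (τ ^ 2 + 4 * γ * τ) + 4 * n * N * γ ^ 2) *
        (2 * Real.sqrt (S x))⁻¹) (nhdsWithin 0 (Set.Ioi 0)) atTop :=
      tendsto_atTop_add_const_left _ _ hdiv
    have := hadd.const_mul_atTop (r := 1 / (2 * γ)) (by positivity)
    refine this.congr fun x => ?_
    simp only [hφ, div_eq_mul_inv]
  · -- unique root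
    have hiff : ∀ U ∈ Set.Ioo 0 (n * N), (deriv g U = 0 ↔ S U = (n * N * γ) ^ 2) := by
      intro U hU
      have hU0 : 0 < U := hU.1
      have hSU := hSpos U hU0
      have hsqrt : 0 < Real.sqrt (S U) := Real.sqrt_pos.mpr hSU
      have hd := (key U hU0).deriv
      rw [hd]
      simp only [hφ]
      have hm : 0 < 2 * U * (τ ^ 2 + 4 * γ * τ) + 4 * n * N * γ ^ 2 := by positivity
      constructor
      · intro h
        have h2 : -(τ + 2 * γ) + (2 * U * (τ ^ 2 + 4 * γ * τ) + 4 * n * N * γ ^ 2) /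
            (2 * Real.sqrt (S U)) = 0 := by
          have hne : (1 : ℝ) / (2 * γ) ≠ 0 := by positivity
          exact (mul_eq_zero.mp h).resolve_left hne
        have h2' : (2 * U * (τ ^ 2 + 4 * γ * τ) + 4 * n * N * γ ^ 2) /
            (2 * Real.sqrt (S U)) = τ + 2 * γ := by linarith
        have h3 : 2 * U * (τ ^ 2 + 4 * γ * τ) + 4 * n * N * γ ^ 2 =
            (τ + 2 * γ) * (2 * Real.sqrt (S U)) := by
          rw [div_eq_iff (by positivity : (2 * Real.sqrt (S U)) ≠ 0)] at h2'
          linarith [h2']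
        have h4 : (2 * U * (τ ^ 2 + 4 * γ * τ) + 4 * n * N * γ ^ 2) ^ 2 =
            4 * (τ + 2 * γ) ^ 2 * S U := by
          rw [h3]
          have hss := Real.sq_sqrt hSU.le
          linear_combination (4 * (τ + 2 * γ) ^ 2) * hss
        have h5 : 16 * γ ^ 2 * S U = 16 * γ ^ 2 * (n * N * γ) ^ 2 := by
          simp only [hS] at h4 ⊢
          linear_combination (-1 : ℝ) * h4
        exact mul_left_cancel₀ (by positivity : (16:ℝ) * γ ^ 2 ≠ 0) h5
      · intro h
        have hsv : Real.sqrt (S U) = n * N * γ := by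
          rw [h, Real.sqrt_sq (by positivity)]
        have hm2 : (2 * U * (τ ^ 2 + 4 * γ * τ) + 4 * n * N * γ ^ 2) ^ 2 =
            (2 * (n * N * γ) * (τ + 2 * γ)) ^ 2 := by
          simp only [hS] at h
          linear_combination (4 * (τ ^ 2 + 4 * γ * τ)) * h
        have hmeq : 2 * U * (τ ^ 2 + 4 * γ * τ) + 4 * n * N * γ ^ 2 =
            2 * (n * N * γ) * (τ + 2 * γ) := by
          have h1 := Real.sqrt_sq hm.le
          have h2 := Real.sqrt_sq (by positivity : (0:ℝ) ≤ 2 * (n * N * γ) * (τ + 2 * γ))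
          rw [← h1, hm2, h2]
        rw [hsv, hmeq]
        have hnNγ : (0:ℝ) < n * N * γ := by positivity
        field_simp
        ring
    -- solve S U = (n N γ)^2 on Ioo
    have hScont : ContinuousOn S (Set.Icc 0 (n * N)) := by
      have : Continuous S := by rw [hS]; fun_prop
      exact this.continuousOn
    have hS0 : S 0 = 0 := by simp [hS]
    have hSnN : ((n * N * γ) ^ 2) ∈ Set.Ioo (S 0) (S (n * N)) := by
      constructor
      · rw [hS0]; positivity
      · simp only [hS]
        have hkey : (0:ℝ) < (n * N) ^ 2 * (τ ^ 2 + 4 * γ * τ + 3 * γ ^ 2) := by positivity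
        nlinarith [hkey]
    obtain ⟨U, hUmem, hUval⟩ := intermediate_value_Ioo hnN.le hScont hSnN
    refine ⟨U, ⟨hUmem, (hiff U hUmem).mpr hUval⟩, ?_⟩
    rintro V ⟨hVmem, hVd⟩
    have hVval := (hiff V hVmem).mp hVd
    -- S injective on positives
    by_contra hne
    have hkey : S V = S U := by rw [hVval, hUval]
    simp only [hS] at hkey
    have hA : (0:ℝ) < τ ^ 2 + 4 * γ * τ := by positivity
    have hB : (0:ℝ) < 4 * n * N * γ ^ 2 := by positivity
    rcases lt_or_gt_of_ne hne with h | h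
    · have h1 : V ^ 2 < U ^ 2 := by nlinarith [hVmem.1, hUmem.1]
      have h2 := mul_lt_mul_of_pos_right h1 hA
      nlinarith [h2, mul_lt_mul_of_pos_left h hB]
    · have h1 : U ^ 2 < V ^ 2 := by nlinarith [hVmem.1, hUmem.1]
      have h2 := mul_lt_mul_of_pos_right h1 hA
      nlinarith [h2, mul_lt_mul_of_pos_left h hB]
end

section
/- Let γ, τ, n, N > 0 and g as above. For every positive integer n_l ≥ 1, the function h_l(U) = U + g(U)(1/n_l + τ/γ + 1) satisfies h_l'(U) > 0 for all U ∈ (0, nN), i.e. h_l is strictly increasing on (0, nN). -/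
theorem h_strictly_increasing
    (γ τ n N : ℝ) (hγ : 0 < γ) (hτ : 0 < τ) (hn : 0 < n) (hN : 0 < N)
    (g : ℝ → ℝ)
    (hg : ∀ U, g U = (1 / (2 * γ)) *
      (-(U * (τ + 2 * γ)) + Real.sqrt (U ^ 2 * (τ ^ 2 + 4 * γ * τ) + 4 * U * n * N * γ ^ 2)))
    (nl : ℕ) (hnl : 1 ≤ nl)
    (h : ℝ → ℝ)
    (hh : ∀ U, h U = U + g U * (1 / (nl : ℝ) + τ / γ + 1)) :
    (∀ U ∈ Set.Ioo (0:ℝ) (n * N), 0 < deriv h U) ∧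
    StrictMonoOn h (Set.Ioo (0:ℝ) (n * N)) := by
  have hfun : h = fun U => U + (1 / (2 * γ)) *
      (-(U * (τ + 2 * γ)) + Real.sqrt (U ^ 2 * (τ ^ 2 + 4 * γ * τ) + 4 * U * n * N * γ ^ 2)) *
      (1 / (nl : ℝ) + τ / γ + 1) := by
    funext U; rw [hh U, hg U]
  have hnl' : (1:ℝ) ≤ (nl:ℝ) := by exact_mod_cast hnl
  have hcpos : 0 < 1 / (nl : ℝ) + τ / γ + 1 := by positivity
  set c : ℝ := 1 / (nl : ℝ) + τ / γ + 1 with hc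
  have hcle : γ * c ≤ τ + 2 * γ := by
    have h1 : 1 / (nl:ℝ) ≤ 1 := by
      rw [div_le_one (by linarith)]; exact hnl'
    have : c ≤ 1 + τ / γ + 1 := by rw [hc]; linarith
    calc γ * c ≤ γ * (1 + τ / γ + 1) := by nlinarith
      _ = τ + 2 * γ := by field_simp; ring
  -- main derivative fact
  have main : ∀ U ∈ Set.Ioo (0:ℝ) (n * N), 0 < deriv h U := by
    intro U hU
    obtain ⟨hU0, hUm⟩ := hU
    have hppos : 0 < U ^ 2 * (τ ^ 2 + 4 * γ * τ) + 4 * U * n * N * γ ^ 2 := by positivity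
    set S : ℝ := Real.sqrt (U ^ 2 * (τ ^ 2 + 4 * γ * τ) + 4 * U * n * N * γ ^ 2) with hS
    have hSpos : 0 < S := Real.sqrt_pos.mpr hppos
    have hS2 : S ^ 2 = U ^ 2 * (τ ^ 2 + 4 * γ * τ) + 4 * U * n * N * γ ^ 2 :=
      Real.sq_sqrt hppos.le
    -- derivative of inner polynomial
    have hp : HasDerivAt (fun x : ℝ => x ^ 2 * (τ ^ 2 + 4 * γ * τ) + 4 * x * n * N * γ ^ 2)
        (2 * U * (τ ^ 2 + 4 * γ * τ) + 4 * n * N * γ ^ 2) U := by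
      have h1 : HasDerivAt (fun x : ℝ => x ^ 2 * (τ ^ 2 + 4 * γ * τ))
          (2 * U * (τ ^ 2 + 4 * γ * τ)) U := by
        simpa using (hasDerivAt_pow 2 U).mul_const (τ ^ 2 + 4 * γ * τ)
      have h2 : HasDerivAt (fun x : ℝ => 4 * x * n * N * γ ^ 2) (4 * n * N * γ ^ 2) U := by
        have := ((((hasDerivAt_id U).const_mul (4:ℝ)).mul_const n).mul_const N).mul_const (γ ^ 2)
        simpa using this
      exact h1.add h2
    have hsqrt : HasDerivAt
        (fun x : ℝ => Real.sqrt (x ^ 2 * (τ ^ 2 + 4 * γ * τ) + 4 * x * n * N * γ ^ 2))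
        ((2 * U * (τ ^ 2 + 4 * γ * τ) + 4 * n * N * γ ^ 2) / (2 * S)) U :=
      hp.sqrt hppos.ne'
    have hlin : HasDerivAt (fun x : ℝ => -(x * (τ + 2 * γ))) (-(τ + 2 * γ)) U := by
      simpa [Pi.neg_def] using ((hasDerivAt_id U).mul_const (τ + 2 * γ)).neg
    have hf : HasDerivAt h
        (1 + (1 / (2 * γ)) *
          (-(τ + 2 * γ) + (2 * U * (τ ^ 2 + 4 * γ * τ) + 4 * n * N * γ ^ 2) / (2 * S)) * c) U := by
      rw [hfun]
      have := (hasDerivAt_id U).add (((hlin.add hsqrt).const_mul (1 / (2 * γ))).mul_const c)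
      simpa [Pi.add_def] using this
    rw [hf.deriv]
    -- key inequality
    have hEpos : 0 < (τ + 2 * γ) ^ 2 - 2 * γ ^ 2 := by nlinarith
    have hkey : 2 * S * ((τ + 2 * γ) ^ 2 - 2 * γ ^ 2) <
        (τ + 2 * γ) * (2 * U * (τ ^ 2 + 4 * γ * τ) + 4 * n * N * γ ^ 2) := by
      refine lt_of_pow_lt_pow_left₀ 2 (by positivity) ?_
      have hfac : 0 < 16 * γ ^ 4 * (n * N - U) *
          ((τ ^ 2 + 4 * γ * τ) * U + (τ + 2 * γ) ^ 2 * (n * N)) := by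
        have : 0 < n * N - U := by linarith
        positivity
      nlinarith [hS2, hfac]
    set q' : ℝ := 2 * U * (τ ^ 2 + 4 * γ * τ) + 4 * n * N * γ ^ 2 with hq'
    have hq'pos : 0 < q' := by positivity
    -- conclude positivity
    have hnum : 0 < 4 * γ * S + (-(2 * S * (τ + 2 * γ)) + q') * c := by
      nlinarith [mul_lt_mul_of_pos_right hkey hcpos, mul_pos hSpos hγ,
        mul_nonneg (mul_nonneg (mul_nonneg (by linarith : (0:ℝ) ≤ 4) hγ.le) hSpos.le)
          (sub_nonneg.mpr hcle), mul_pos (mul_pos hSpos hγ) hcpos]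
    have heq : 1 + (1 / (2 * γ)) * (-(τ + 2 * γ) + q' / (2 * S)) * c
        = (4 * γ * S + (-(2 * S * (τ + 2 * γ)) + q') * c) / (4 * γ * S) := by
      field_simp
      ring
    rw [heq]
    exact div_pos hnum (by positivity)
  refine ⟨main, ?_⟩
  have hcont : ContinuousOn h (Set.Ioo (0:ℝ) (n * N)) := by
    rw [hfun]
    fun_prop
  have := strictMonoOn_of_deriv_pos (convex_Ioo (0:ℝ) (n * N)) hcont ?_
  · exact this
  · intro x hx
    exact main x (by simpa [interior_Ioo] using hx)
end

section
/- Suppose γ, τ, n, N > 0 and the network data satisfy τ > τ_c = γn/(⟨n²⟩−n). Define g as the nonnegative root of γnNU = γZ² + ZU(τ+2γ) + γU², and f(U) = (τU/(U+g(U))²) Σ_l n_l(n_l−1)N_l/(γ + τn_l · g(U)/(U+g(U))). Then f is continuous and strictly increasing on (0, nN), lim_{U→0⁺} f(U) < 1, f(nN) > 1, and hence there exists a unique U* ∈ (0, nN) with f(U*) = 1. -/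
open Filter


lemma phi_anti (γ τ C : ℝ) (hγ : 0 < γ) (hτ : 0 < τ) (hC : 0 < C)
    {a b : ℝ} (ha : 0 ≤ a) (hab : a < b) (hb : b ≤ 1) :
    C*(1-b)^2*(γ+τ*(a*(1-a))) < C*(1-a)^2*(γ+τ*(b*(1-b))) := by
  have h1 : (0:ℝ) < γ*(2-a-b)+τ*((1-a)*(1-b)) := by
    have := mul_nonneg (mul_nonneg hτ.le (by linarith : (0:ℝ) ≤ 1-a)) (by linarith : (0:ℝ) ≤ 1-b)
    nlinarith [mul_pos hγ (by linarith : (0:ℝ) < 2-a-b)]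
  nlinarith [mul_pos (sub_pos.2 hab) h1, sq_nonneg (1-a), sq_nonneg (1-b)]

lemma denom_pos (γ τ : ℝ) (hγ : 0 < γ) (hτ : 0 < τ) {D a : ℝ} (hD : 0 ≤ D) (ha : 0 ≤ a) :
    0 < γ + τ*D*a := by positivity

lemma term_le (γ τ : ℝ) (hγ : 0 < γ) (hτ : 0 < τ) {D : ℝ} (hD : 1 ≤ D)
    {a b : ℝ} (ha : 0 ≤ a) (hab : a ≤ b) (hb : b ≤ 1) :
    (γ+τ*(b*(1-b)))/(γ+τ*D*b) ≤ (γ+τ*(a*(1-a)))/(γ+τ*D*a) := by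
  have hb0 : (0:ℝ) ≤ b := le_trans ha hab
  rw [div_le_div_iff₀ (denom_pos γ τ hγ hτ (by linarith) hb0) (denom_pos γ τ hγ hτ (by linarith) ha)]
  have key : (0:ℝ) ≤ (b-a)*(τ*(γ*(D-1+(a+b))+τ*(D*(a*b)))) := by
    have h2 : (0:ℝ) ≤ τ*(D*(a*b)) := by positivity
    have h3 : (0:ℝ) ≤ γ*(D-1+(a+b)) := by nlinarith
    have h4 : (0:ℝ) ≤ τ*(γ*(D-1+(a+b))+τ*(D*(a*b))) := by nlinarith
    exact mul_nonneg (by linarith) h4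
  nlinarith [key]

lemma term_lt (γ τ : ℝ) (hγ : 0 < γ) (hτ : 0 < τ) {D : ℝ} (hD : 2 ≤ D)
    {a b : ℝ} (ha : 0 ≤ a) (hab : a < b) (hb : b ≤ 1) :
    (γ+τ*(b*(1-b)))/(γ+τ*D*b) < (γ+τ*(a*(1-a)))/(γ+τ*D*a) := by
  have hb0 : (0:ℝ) ≤ b := le_trans ha hab.le
  rw [div_lt_div_iff₀ (denom_pos γ τ hγ hτ (by linarith) hb0) (denom_pos γ τ hγ hτ (by linarith) ha)]
  have key : (0:ℝ) < (b-a)*(τ*(γ*(D-1+(a+b))+τ*(D*(a*b)))) := by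
    have h2 : (0:ℝ) ≤ τ*(D*(a*b)) := by positivity
    have h3 : (0:ℝ) < γ*(D-1+(a+b)) := by nlinarith
    have h4 : (0:ℝ) < τ*(γ*(D-1+(a+b))+τ*(D*(a*b))) := by nlinarith
    exact mul_pos (by linarith) h4
  nlinarith [key]

noncomputable def Gex (γ τ C : ℝ) (U : ℝ) : ℝ :=
  (Real.sqrt ((U*(τ+2*γ))^2 + 4*(γ*γ)*(C*U - U^2)) - U*(τ+2*γ)) / (2*γ)

lemma Gex_spec (γ τ C : ℝ) (hγ : 0 < γ) (hτ : 0 < τ) {U : ℝ} (hU0 : 0 ≤ U) (hUC : U ≤ C) :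
    0 ≤ Gex γ τ C U ∧ γ*C*U = γ*(Gex γ τ C U)^2 + (Gex γ τ C U)*U*(τ+2*γ) + γ*U^2 := by
  simp only [Gex]
  set t := U*(τ+2*γ) with ht
  have ht0 : 0 ≤ t := by positivity
  have hdisc : 0 ≤ t^2 + 4*(γ*γ)*(C*U - U^2) := by
    nlinarith [sq_nonneg t, mul_nonneg hU0 (by linarith : (0:ℝ) ≤ C - U)]
  set S := Real.sqrt (t^2 + 4*(γ*γ)*(C*U - U^2)) with hS
  have hS0 : 0 ≤ S := Real.sqrt_nonneg _
  have hS2 : S^2 = t^2 + 4*(γ*γ)*(C*U - U^2) := Real.sq_sqrt hdisc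
  have hSt : t ≤ S := by nlinarith [sq_nonneg (S+t), mul_nonneg hU0 (by linarith : (0:ℝ) ≤ C - U)]
  clear_value S
  clear_value t
  subst ht
  constructor
  · apply div_nonneg (by linarith) (by linarith)
  · field_simp
    linear_combination (-1) * hS2

lemma g_unique (γ τ C : ℝ) (hγ : 0 < γ) (hτ : 0 < τ) {U x y : ℝ} (hU0 : 0 ≤ U)
    (hx0 : 0 ≤ x) (hy0 : 0 ≤ y)
    (hx : γ*C*U = γ*x^2 + x*U*(τ+2*γ) + γ*U^2)
    (hy : γ*C*U = γ*y^2 + y*U*(τ+2*γ) + γ*U^2) : x = y := by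
  have key : (x - y)*(γ*(x+y) + U*(τ+2*γ)) = 0 := by linear_combination hy - hx
  rcases mul_eq_zero.1 key with h | h
  · linarith
  · have h1 : 0 ≤ γ*(x+y) := by positivity
    have h2 : 0 ≤ U*(τ+2*γ) := by positivity
    have hxy : x + y = 0 := by nlinarith
    linarith

lemma w_identity (γ τ C U gv : ℝ) (hγ : 0 < γ) (hU : 0 < U) (hg0 : 0 ≤ gv)
    (heq : γ*C*U = γ*gv^2 + gv*U*(τ+2*γ) + γ*U^2) :
    U * (γ + τ*((gv/(U+gv))*(1 - gv/(U+gv)))) = γ*C*(1 - gv/(U+gv))^2 := by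
  have hs : 0 < U + gv := by linarith
  have hs' : U + gv ≠ 0 := ne_of_gt hs
  field_simp
  linear_combination (-U) * heq

lemma prefactor_eq (γ τ C U gv : ℝ) (hγ : 0 < γ) (hC : 0 < C) (hU : 0 < U) (hg0 : 0 ≤ gv)
    (heq : γ*C*U = γ*gv^2 + gv*U*(τ+2*γ) + γ*U^2) :
    τ*U/(U+gv)^2 = τ/(γ*C) * (γ + τ*((gv/(U+gv))*(1 - gv/(U+gv)))) := by
  have hs : 0 < U + gv := by linarith
  have hs' : U + gv ≠ 0 := ne_of_gt hs
  field_simp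
  linear_combination τ * heq
set_option maxHeartbeats 2000000 in
theorem endemic_equilibrium_exists_unique
    (γ τ : ℝ) (hγ : 0 < γ) (hτ : 0 < τ)
    (L : ℕ) (hL : 0 < L)
    (d mlt : Fin L → ℕ)
    (hd : ∀ l, 1 ≤ d l) (hmlt : ∀ l, 0 < mlt l)
    (N n m2 τc : ℝ) (hN : N = ∑ l, (mlt l : ℝ))
    (hn : n = (1 / N) * ∑ l, (d l : ℝ) * (mlt l : ℝ))
    (hm2 : m2 = (1 / N) * ∑ l, (d l : ℝ) ^ 2 * (mlt l : ℝ))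
    (hm2n : n < m2)
    (hτc : τc = γ * n / (m2 - n))
    (hsup : τc < τ)
    (g : ℝ → ℝ)
    (hg : ∀ U ∈ Set.Icc (0:ℝ) (n * N),
      0 ≤ g U ∧ γ * n * N * U = γ * (g U) ^ 2 + g U * U * (τ + 2 * γ) + γ * U ^ 2)
    (f : ℝ → ℝ)
    (hf : ∀ U, f U = (τ * U / (U + g U) ^ 2) *
      ∑ l, (d l : ℝ) * ((d l : ℝ) - 1) * (mlt l : ℝ) /
        (γ + τ * (d l : ℝ) * (g U / (U + g U)))) :
    ContinuousOn f (Set.Ioo 0 (n * N)) ∧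
    StrictMonoOn f (Set.Ioo 0 (n * N)) ∧
    (∃ c : ℝ, Filter.Tendsto f (nhdsWithin 0 (Set.Ioi 0)) (nhds c) ∧ c < 1) ∧
    1 < f (n * N) ∧
    (∃! U : ℝ, U ∈ Set.Ioo 0 (n * N) ∧ f U = 1) := by
  -- basic positivity facts
  have hN0 : 0 < N := by
    rw [hN]
    exact Finset.sum_pos (fun l _ => by exact_mod_cast hmlt l) ⟨⟨0, hL⟩, Finset.mem_univ _⟩
  have hsum2 : ∑ l, (d l : ℝ) * (mlt l : ℝ) = n * N := by
    rw [hn]; field_simp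
  have hsum3 : ∑ l, (d l : ℝ) ^ 2 * (mlt l : ℝ) = m2 * N := by
    rw [hm2]; field_simp
  have hsum1 : ∑ l, (mlt l : ℝ) = N := hN.symm
  have hd1 : ∀ l, (1:ℝ) ≤ (d l : ℝ) := fun l => by exact_mod_cast hd l
  have hm0 : ∀ l, (0:ℝ) < (mlt l : ℝ) := fun l => by exact_mod_cast hmlt l
  have hn1 : 1 ≤ n := by
    have h1 : N ≤ ∑ l, (d l : ℝ) * (mlt l : ℝ) := by
      rw [hN]
      apply Finset.sum_le_sum
      intro l _
      nlinarith [hd1 l, hm0 l]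
    rw [hsum2] at h1
    nlinarith
  have hn0 : 0 < n := by linarith
  have hC : 0 < n * N := by positivity
  have hsumc : ∑ l, (d l : ℝ) * ((d l : ℝ) - 1) * (mlt l : ℝ) = (m2 - n) * N := by
    have h : ∀ l ∈ Finset.univ, (d l : ℝ) * ((d l : ℝ) - 1) * (mlt l : ℝ)
        = (d l : ℝ)^2 * (mlt l : ℝ) - (d l : ℝ) * (mlt l : ℝ) := fun l _ => by ring
    rw [Finset.sum_congr rfl h, Finset.sum_sub_distrib, hsum2, hsum3]; ring
  have hsumd1 : ∑ l, ((d l : ℝ) - 1) * (mlt l : ℝ) = n * N - N := by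
    have h : ∀ l ∈ Finset.univ, ((d l : ℝ) - 1) * (mlt l : ℝ)
        = (d l : ℝ) * (mlt l : ℝ) - (mlt l : ℝ) := fun l _ => by ring
    rw [Finset.sum_congr rfl h, Finset.sum_sub_distrib, hsum2, hsum1]
  have hm2n' : 0 < m2 - n := by linarith
  have hτend : γ * n < τ * (m2 - n) := by
    rw [hτc, div_lt_iff₀ hm2n'] at hsup
    linarith
  -- some l has degree ≥ 2
  obtain ⟨l0, hl0⟩ : ∃ l, 2 ≤ d l := by
    by_contra h
    push_neg at h
    have hall : ∀ l, d l = 1 := fun l => le_antisymm (by have := h l; omega) (hd l)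
    have e2 : n * N = N := by
      rw [← hsum2, ← hsum1]
      exact Finset.sum_congr rfl fun l _ => by rw [hall l]; norm_num
    have e3 : m2 * N = N := by
      rw [← hsum3, ← hsum1]
      exact Finset.sum_congr rfl fun l _ => by rw [hall l]; norm_num
    have : n = m2 := mul_right_cancel₀ (ne_of_gt hN0) (e2.trans e3.symm)
    linarith
  have hdl0 : (2:ℝ) ≤ (d l0 : ℝ) := by exact_mod_cast hl0
  -- the auxiliary function K
  obtain ⟨K, hKdef⟩ : ∃ K : ℝ → ℝ, K = fun x => (τ/(γ*(n*N)) * (γ + τ*(x*(1-x)))) *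
      ∑ l, (d l : ℝ) * ((d l : ℝ) - 1) * (mlt l : ℝ) / (γ + τ * (d l : ℝ) * x) := ⟨_, rfl⟩
  have hKalt : ∀ x : ℝ, K x = (τ/(γ*(n*N))) *
      ∑ l, (d l : ℝ) * ((d l : ℝ) - 1) * (mlt l : ℝ) *
        ((γ + τ*(x*(1-x)))/(γ + τ * (d l : ℝ) * x)) := by
    intro x
    rw [hKdef]
    simp only
    rw [Finset.mul_sum, Finset.mul_sum]
    exact Finset.sum_congr rfl fun l _ => by ring
  -- basic facts about g on Ioc
  have hgfacts : ∀ U ∈ Set.Ioc (0:ℝ) (n*N),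
      0 < U + g U ∧ 0 ≤ g U / (U + g U) ∧ g U / (U + g U) < 1 ∧
      U * (γ + τ*((g U/(U+g U))*(1 - g U/(U+g U)))) = γ*(n*N)*(1 - g U/(U+g U))^2 ∧
      f U = K (g U / (U + g U)) := by
    intro U hU
    have hUm : U ∈ Set.Icc (0:ℝ) (n*N) := ⟨hU.1.le, hU.2⟩
    obtain ⟨hg0, heq⟩ := hg U hUm
    have heq' : γ*(n*N)*U = γ*(g U)^2 + g U*U*(τ+2*γ) + γ*U^2 := by linear_combination heq
    have hs : 0 < U + g U := by linarith [hU.1]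
    have hw0 : 0 ≤ g U / (U + g U) := div_nonneg hg0 hs.le
    have hw1 : g U / (U + g U) < 1 := by
      rw [div_lt_one hs]; linarith [hU.1]
    refine ⟨hs, hw0, hw1, w_identity γ τ (n*N) U (g U) hγ hU.1 hg0 heq', ?_⟩
    rw [hf U, hKdef]
    simp only
    congr 1
    exact prefactor_eq γ τ (n*N) U (g U) hγ hC hU.1 hg0 heq'
  -- strict antitonicity of K on [0,1]
  have hKanti : ∀ a b : ℝ, 0 ≤ a → a < b → b ≤ 1 → K b < K a := by
    intro a b ha hab hb
    rw [hKalt, hKalt]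
    apply mul_lt_mul_of_pos_left _ (by positivity : (0:ℝ) < τ/(γ*(n*N)))
    apply Finset.sum_lt_sum
    · intro l _
      have hc : 0 ≤ (d l : ℝ) * ((d l : ℝ) - 1) * (mlt l : ℝ) :=
        mul_nonneg (mul_nonneg (by linarith [hd1 l]) (by linarith [hd1 l])) (hm0 l).le
      exact mul_le_mul_of_nonneg_left (term_le γ τ hγ hτ (hd1 l) ha hab.le hb) hc
    · refine ⟨l0, Finset.mem_univ _, ?_⟩
      have hc : 0 < (d l0 : ℝ) * ((d l0 : ℝ) - 1) * (mlt l0 : ℝ) :=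
        mul_pos (mul_pos (by linarith) (by linarith)) (hm0 l0)
      exact mul_lt_mul_of_pos_left (term_lt γ τ hγ hτ hdl0 ha hab hb) hc
  -- D is positive
  have hDpos : ∀ x : ℝ, 0 ≤ x → x ≤ 1 → 0 < γ + τ*(x*(1-x)) := by
    intro x h0 h1
    nlinarith [mul_nonneg (mul_nonneg hτ.le h0) (by linarith : (0:ℝ) ≤ 1-x)]
  -- w is strictly decreasing
  have hwanti : ∀ U1 ∈ Set.Ioc (0:ℝ) (n*N), ∀ U2 ∈ Set.Ioc (0:ℝ) (n*N), U1 < U2 →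
      g U2 / (U2 + g U2) < g U1 / (U1 + g U1) := by
    intro U1 h1 U2 h2 h12
    obtain ⟨-, hw01, hw11, hid1, -⟩ := hgfacts U1 h1
    obtain ⟨-, hw02, hw12, hid2, -⟩ := hgfacts U2 h2
    set x1 := g U1 / (U1 + g U1) with hx1def
    set x2 := g U2 / (U2 + g U2) with hx2def
    by_contra h
    push_neg at h
    have hD1 := hDpos x1 hw01 hw11.le
    have hD2 := hDpos x2 hw02 hw12.le
    rcases eq_or_lt_of_le h with heq | hlt
    · rw [← heq] at hid2
      have hzero : (U1 - U2) * (γ + τ*(x1*(1-x1))) = 0 := by linear_combination hid1 - hid2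
      rcases mul_eq_zero.1 hzero with h' | h'
      · linarith
      · linarith
    · have hphi := phi_anti γ τ (γ*(n*N)) hγ hτ (by positivity) hw01 hlt hw12.le
      rw [← hid1, ← hid2] at hphi
      have hprod := mul_pos (sub_pos.2 h12) (mul_pos hD1 hD2)
      linarith only [hphi, hprod]
  -- StrictMonoOn f
  have hmono : StrictMonoOn f (Set.Ioo 0 (n * N)) := by
    intro U1 h1 U2 h2 h12
    have h1' : U1 ∈ Set.Ioc (0:ℝ) (n*N) := ⟨h1.1, h1.2.le⟩
    have h2' : U2 ∈ Set.Ioc (0:ℝ) (n*N) := ⟨h2.1, h2.2.le⟩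
    obtain ⟨-, hw01, hw11, -, hfK1⟩ := hgfacts U1 h1'
    obtain ⟨-, hw02, hw12, -, hfK2⟩ := hgfacts U2 h2'
    rw [hfK1, hfK2]
    exact hKanti _ _ hw02 (hwanti U1 h1' U2 h2' h12) hw11.le
  -- g agrees with the explicit formula
  have hgG : ∀ U ∈ Set.Icc (0:ℝ) (n*N), g U = Gex γ τ (n*N) U := by
    intro U hU
    obtain ⟨hg0, heq⟩ := hg U hU
    obtain ⟨hG0, hGeq⟩ := Gex_spec γ τ (n*N) hγ hτ hU.1 hU.2
    exact g_unique γ τ (n*N) hγ hτ hU.1 hg0 hG0 (by linear_combination heq) hGeq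
  -- continuity
  have hGcont : Continuous (Gex γ τ (n*N)) := by
    unfold Gex
    have h1 : Continuous fun U : ℝ => (U*(τ+2*γ))^2 + 4*(γ*γ)*((n*N)*U - U^2) :=
      ((continuous_id.mul continuous_const).pow 2).add
        (continuous_const.mul ((continuous_const.mul continuous_id).sub (continuous_pow 2)))
    exact ((Real.continuous_sqrt.comp h1).sub (continuous_id.mul continuous_const)).div_const _
  have hwG : ∀ U ∈ Set.Icc (0:ℝ) (n*N), 0 ≤ Gex γ τ (n*N) U :=
    fun U hU => (Gex_spec γ τ (n*N) hγ hτ hU.1 hU.2).1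
  have hwGcont : ContinuousOn (fun U => Gex γ τ (n*N) U / (U + Gex γ τ (n*N) U))
      (Set.Ioo 0 (n*N)) := by
    apply ContinuousOn.div hGcont.continuousOn (continuous_id.add hGcont).continuousOn
    intro U hU
    have h0 := hwG U ⟨hU.1.le, hU.2.le⟩
    have : 0 < U + Gex γ τ (n*N) U := by linarith [hU.1]
    exact ne_of_gt this
  have hKcont : ContinuousOn K (Set.Ici (0:ℝ)) := by
    rw [hKdef]
    apply ContinuousOn.mul
    · exact (continuous_const.mul ((continuous_const.add
        (continuous_const.mul (continuous_id.mul (continuous_const.sub continuous_id)))))).continuousOn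
    · apply continuousOn_finset_sum
      intro l _
      apply ContinuousOn.div continuousOn_const
      · exact (continuous_const.add (continuous_const.mul continuous_id)).continuousOn
      · intro x hx
        have hx0 : (0:ℝ) ≤ x := hx
        have : 0 < γ + τ * (d l : ℝ) * x := by positivity
        exact ne_of_gt this
  have hmaps : Set.MapsTo (fun U => Gex γ τ (n*N) U / (U + Gex γ τ (n*N) U))
      (Set.Ioo 0 (n*N)) (Set.Ici (0:ℝ)) := by
    intro U hU
    have h0 : 0 ≤ Gex γ τ (n*N) U := hwG U ⟨hU.1.le, hU.2.le⟩
    have hs : 0 < U + Gex γ τ (n*N) U := by linarith [hU.1]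
    exact div_nonneg h0 hs.le
  have hfeq : ∀ U ∈ Set.Ioo (0:ℝ) (n*N),
      f U = K (Gex γ τ (n*N) U / (U + Gex γ τ (n*N) U)) := by
    intro U hU
    have hU' : U ∈ Set.Ioc (0:ℝ) (n*N) := ⟨hU.1, hU.2.le⟩
    obtain ⟨-, -, -, -, hfK⟩ := hgfacts U hU'
    rw [hfK, hgG U ⟨hU.1.le, hU.2.le⟩]
  have hcont : ContinuousOn f (Set.Ioo 0 (n * N)) := by
    apply ContinuousOn.congr (hKcont.comp hwGcont hmaps)
    intro U hU
    rw [hfeq U hU]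
    rfl
  -- the Ioc neighbourhood
  have hmem : Set.Ioc (0:ℝ) (n*N) ∈ nhdsWithin 0 (Set.Ioi 0) :=
    Ioc_mem_nhdsGT_of_mem ⟨le_refl 0, hC⟩
  -- limit of w at 0+
  have hwlim : Tendsto (fun U => g U / (U + g U)) (nhdsWithin 0 (Set.Ioi 0)) (nhds 1) := by
    have hglim : Tendsto (fun U : ℝ => 1 - Real.sqrt (((γ+τ)/(γ*(n*N)))*U))
        (nhdsWithin 0 (Set.Ioi 0)) (nhds 1) := by
      have hcnt : Continuous fun U : ℝ => 1 - Real.sqrt (((γ+τ)/(γ*(n*N)))*U) := by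
        exact continuous_const.sub (Real.continuous_sqrt.comp (continuous_const.mul continuous_id))
      have := (hcnt.tendsto 0).mono_left (nhdsWithin_le_nhds (s := Set.Ioi (0:ℝ)))
      simpa using this
    apply tendsto_of_tendsto_of_tendsto_of_le_of_le' hglim tendsto_const_nhds
    · filter_upwards [hmem] with U hU
      obtain ⟨hs, hw0, hw1, hid, -⟩ := hgfacts U hU
      set x := g U / (U + g U) with hxdef
      have hxb : x*(1-x) ≤ 1 := mul_le_one₀ hw1.le (by linarith) (by linarith)
      have hb1 : γ*(n*N)*(1-x)^2 ≤ U*(γ+τ) := by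
        have hxx : τ*(x*(1-x)) ≤ τ := mul_le_of_le_one_right hτ.le hxb
        have h2 : U*(γ + τ*(x*(1-x))) ≤ U*(γ+τ) :=
          mul_le_mul_of_nonneg_left (by linarith only [hxx]) hU.1.le
        linarith only [hid, h2]
      have hb2 : (1-x)^2 ≤ ((γ+τ)/(γ*(n*N)))*U := by
        rw [div_mul_eq_mul_div, le_div_iff₀ (by positivity)]
        linarith only [hb1]
      have hb3 : 1 - x ≤ Real.sqrt (((γ+τ)/(γ*(n*N)))*U) := by
        have := Real.sqrt_le_sqrt hb2
        rwa [Real.sqrt_sq (by linarith : (0:ℝ) ≤ 1-x)] at this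
      linarith
    · filter_upwards [hmem] with U hU
      exact (hgfacts U hU).2.2.1.le
  -- limit of f at 0+
  have hlim : Tendsto f (nhdsWithin 0 (Set.Ioi 0)) (nhds (K 1)) := by
    have hKw : ContinuousWithinAt K (Set.Ici 0) 1 := hKcont 1 (by norm_num)
    have hin : Tendsto (fun U => g U / (U + g U)) (nhdsWithin 0 (Set.Ioi 0))
        (nhdsWithin 1 (Set.Ici 0)) := by
      apply tendsto_nhdsWithin_iff.2 ⟨hwlim, ?_⟩
      filter_upwards [hmem] with U hU
      exact (hgfacts U hU).2.1
    have hcomp := hKw.tendsto.comp hin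
    apply hcomp.congr'
    filter_upwards [hmem] with U hU
    exact ((hgfacts U hU).2.2.2.2).symm
  -- K 1 < 1
  have hK1 : K 1 < 1 := by
    have hstep : ∀ l ∈ Finset.univ, (d l : ℝ) * ((d l : ℝ) - 1) * (mlt l : ℝ) *
        ((γ + τ*((1:ℝ)*(1-1)))/(γ + τ * (d l : ℝ) * 1)) ≤ γ*(((d l : ℝ)-1)*(mlt l : ℝ))/τ := by
      intro l _
      have hden : 0 < γ + τ * (d l : ℝ) * 1 := by positivity
      rw [← mul_div_assoc, div_le_div_iff₀ hden hτ]
      nlinarith [mul_nonneg (mul_nonneg (mul_pos hγ hγ).le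
        (by linarith [hd1 l] : (0:ℝ) ≤ (d l : ℝ)-1)) (hm0 l).le]
    have hsumle : ∑ l, (d l : ℝ) * ((d l : ℝ) - 1) * (mlt l : ℝ) *
        ((γ + τ*((1:ℝ)*(1-1)))/(γ + τ * (d l : ℝ) * 1))
        ≤ γ*(n*N-N)/τ := by
      calc _ ≤ ∑ l, γ*(((d l : ℝ)-1)*(mlt l : ℝ))/τ := Finset.sum_le_sum hstep
      _ = γ*(n*N-N)/τ := by rw [← Finset.sum_div, ← Finset.mul_sum, hsumd1]
    calc K 1 ≤ (τ/(γ*(n*N))) * (γ*(n*N-N)/τ) := by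
          rw [hKalt 1]
          exact mul_le_mul_of_nonneg_left hsumle (by positivity)
    _ = (n*N-N)/(n*N) := by
          rw [div_mul_div_comm, div_eq_div_iff (by positivity : (0:ℝ) < γ*(n*N)*τ).ne' hC.ne']
          ring
    _ < 1 := by rw [div_lt_one hC]; linarith
  -- value at n*N
  have hgnN : g (n*N) = 0 := by
    obtain ⟨hg0, heq⟩ := hg (n*N) ⟨hC.le, le_refl _⟩
    have h1 : γ*(g (n*N))^2 + g (n*N)*(n*N)*(τ+2*γ) = 0 := by linear_combination -heq
    have hpos : 0 < (n*N)*(τ+2*γ) := by positivity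
    have h3 : 0 ≤ γ*(g (n*N))^2 := by positivity
    have h4 : 0 ≤ g (n*N)*((n*N)*(τ+2*γ)) := mul_nonneg hg0 hpos.le
    have h5 : g (n*N)*((n*N)*(τ+2*γ)) = 0 := by linarith only [h1, h3, h4]
    exact (mul_eq_zero.1 h5).resolve_right hpos.ne'
  have hnNIoc : (n*N) ∈ Set.Ioc (0:ℝ) (n*N) := ⟨hC, le_refl _⟩
  have hfnNK : f (n*N) = K 0 := by
    obtain ⟨-, -, -, -, hfK⟩ := hgfacts (n*N) hnNIoc
    rw [hfK, hgnN]
    norm_num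
  have hfnN : 1 < f (n*N) := by
    rw [hfnNK, hKalt 0]
    have hsimp : ∀ l ∈ Finset.univ, (d l : ℝ) * ((d l : ℝ) - 1) * (mlt l : ℝ) *
        ((γ + τ*((0:ℝ)*(1-0)))/(γ + τ * (d l : ℝ) * 0))
        = (d l : ℝ) * ((d l : ℝ) - 1) * (mlt l : ℝ) := by
      intro l _
      have : γ + τ*((0:ℝ)*(1-0)) = γ := by ring
      rw [this]
      have : γ + τ * (d l : ℝ) * 0 = γ := by ring
      rw [this, div_self (ne_of_gt hγ), mul_one]
    rw [Finset.sum_congr rfl hsimp, hsumc]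
    rw [show (τ/(γ*(n*N))) * ((m2-n)*N) = τ*(m2-n)/(γ*n) from by field_simp]
    rw [lt_div_iff₀ (by positivity)]
    linarith
  refine ⟨hcont, hmono, ⟨K 1, hlim, hK1⟩, hfnN, ?_⟩
  -- limit of f at (n*N)-
  have hmemL : Set.Ioo (0:ℝ) (n*N) ∈ nhdsWithin (n*N) (Set.Iio (n*N)) :=
    Ioo_mem_nhdsLT_of_mem ⟨hC, le_refl _⟩
  have hGnN : Gex γ τ (n*N) (n*N) = 0 := by
    rw [← hgG (n*N) ⟨hC.le, le_refl _⟩, hgnN]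
  have hwGlim : Tendsto (fun U => Gex γ τ (n*N) U / (U + Gex γ τ (n*N) U))
      (nhdsWithin (n*N) (Set.Iio (n*N))) (nhds 0) := by
    have hc : ContinuousAt (fun U => Gex γ τ (n*N) U / (U + Gex γ τ (n*N) U)) (n*N) := by
      apply ContinuousAt.div hGcont.continuousAt (continuous_id.add hGcont).continuousAt
      show (n*N) + Gex γ τ (n*N) (n*N) ≠ 0
      rw [hGnN]
      simpa using ne_of_gt hC
    have := hc.tendsto.mono_left (nhdsWithin_le_nhds (s := Set.Iio (n*N)))
    simpa [hGnN] using this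
  have hflimL : Tendsto f (nhdsWithin (n*N) (Set.Iio (n*N))) (nhds (f (n*N))) := by
    have hKw : ContinuousWithinAt K (Set.Ici 0) 0 := hKcont 0 (Set.mem_Ici.2 (le_refl 0))
    have hin : Tendsto (fun U => Gex γ τ (n*N) U / (U + Gex γ τ (n*N) U))
        (nhdsWithin (n*N) (Set.Iio (n*N))) (nhdsWithin 0 (Set.Ici 0)) := by
      apply tendsto_nhdsWithin_iff.2 ⟨hwGlim, ?_⟩
      filter_upwards [hmemL] with U hU
      exact hmaps hU
    have hcomp := hKw.tendsto.comp hin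
    rw [hfnNK]
    apply hcomp.congr'
    filter_upwards [hmemL] with U hU
    exact (hfeq U hU).symm
  -- find a with f a < 1
  have hev1 : ∀ᶠ U in nhdsWithin 0 (Set.Ioi 0), f U < 1 := hlim.eventually_lt_const hK1
  have hmemI : Set.Ioo (0:ℝ) (n*N) ∈ nhdsWithin 0 (Set.Ioi 0) :=
    Ioo_mem_nhdsGT_of_mem ⟨le_refl 0, hC⟩
  obtain ⟨a, hfa, ha⟩ := (hev1.and (eventually_of_mem hmemI (fun x hx => hx))).exists
  -- find b with 1 < f b and a < b
  have hev2 : ∀ᶠ U in nhdsWithin (n*N) (Set.Iio (n*N)), 1 < f U :=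
    hflimL.eventually_const_lt hfnN
  have hmemab : Set.Ioo a (n*N) ∈ nhdsWithin (n*N) (Set.Iio (n*N)) :=
    Ioo_mem_nhdsLT_of_mem ⟨ha.2, le_refl _⟩
  obtain ⟨b, hfb, hb⟩ := (hev2.and (eventually_of_mem hmemab (fun x hx => hx))).exists
  have hab : a ≤ b := hb.1.le
  have hIcc : Set.Icc a b ⊆ Set.Ioo 0 (n*N) :=
    fun x hx => ⟨lt_of_lt_of_le ha.1 hx.1, lt_of_le_of_lt hx.2 hb.2⟩
  obtain ⟨U, hU, hfU⟩ := intermediate_value_Icc hab (hcont.mono hIcc) ⟨hfa.le, hfb.le⟩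
  refine ⟨U, ⟨hIcc hU, hfU⟩, ?_⟩
  rintro V ⟨hVm, hVf⟩
  exact hmono.injOn hVm (hIcc hU) (by rw [hVf, hfU])
end

section
/- Let γ, τ > 0 and α = τ(⟨n²⟩−⟨n⟩)/⟨n⟩ − (τ+γ). Both roots of the quadratic λ² + λ(2γ−α) − 2γ(α+τ) have negative real parts if and only if α + τ < 0, i.e. if and only if τ < τ_c = γ⟨n⟩/(⟨n²⟩−⟨n⟩); and if τ > τ_c the quadratic has a positive real root. -/
theorem quadratic_stability
    (γ τ m1 m2 α τc : ℝ) (hγ : 0 < γ) (hτ : 0 < τ)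
    (hm1 : 0 < m1) (hm12 : m1 < m2)
    (hα : α = τ * (m2 - m1) / m1 - (τ + γ))
    (hτc : τc = γ * m1 / (m2 - m1)) :
    ((∀ lam : ℂ, lam ^ 2 + lam * (2 * γ - α) - 2 * γ * (α + τ) = 0 → lam.re < 0)
        ↔ α + τ < 0) ∧
    (α + τ < 0 ↔ τ < τc) ∧
    (τc < τ → ∃ lam : ℝ, 0 < lam ∧ lam ^ 2 + lam * (2 * γ - α) - 2 * γ * (α + τ) = 0) := by
  have hm : 0 < m2 - m1 := by linarith
  have hsum : α + τ = τ * (m2 - m1) / m1 - γ := by rw [hα]; ring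
  -- equivalence α+τ<0 ↔ τ<τc
  have hiff : α + τ < 0 ↔ τ < τc := by
    rw [hsum, hτc, sub_neg, div_lt_iff₀ hm1, lt_div_iff₀ hm]
  -- positive root whenever c<0
  have hposroot : ∀ b c : ℝ, c < 0 →
      ∃ lam : ℝ, 0 < lam ∧ lam ^ 2 + lam * b + c = 0 := by
    intro b c hc
    have hd : 0 ≤ b ^ 2 - 4 * c := by nlinarith
    set s := Real.sqrt (b ^ 2 - 4 * c) with hs
    have hs2 : s ^ 2 = b ^ 2 - 4 * c := Real.sq_sqrt hd
    have hsb : b < s := by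
      have habs : |b| < s := by
        have h1 : |b| = Real.sqrt (b ^ 2) := by rw [Real.sqrt_sq_eq_abs]
        rw [h1]
        apply Real.sqrt_lt_sqrt (sq_nonneg b)
        nlinarith
      calc b ≤ |b| := le_abs_self b
        _ < s := habs
    refine ⟨(s - b) / 2, by linarith, by nlinarith⟩
  refine ⟨?_, hiff, ?_⟩
  · constructor
    · intro h
      by_contra hge
      push_neg at hge
      rcases lt_or_eq_of_le hge with hgt | heq
      · obtain ⟨lam, hl, he⟩ := hposroot (2 * γ - α) (-(2 * γ * (α + τ))) (by nlinarith)
        have hre : lam ^ 2 + lam * (2 * γ - α) - 2 * γ * (α + τ) = 0 := by linarith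
        have := h lam (by exact_mod_cast congrArg (fun t : ℝ => (t : ℂ)) hre)
        simp at this
        linarith
      · have := h 0 (by
          rw [show ((α : ℂ) + τ) = 0 by exact_mod_cast heq.symm]; ring)
        simp at this
    · intro hneg lam hl
      have hb : 0 < 2 * γ - α := by linarith
      have hc : 0 < -(2 * γ * (α + τ)) := by nlinarith
      have hre := congrArg Complex.re hl
      have him := congrArg Complex.im hl
      simp [pow_two, Complex.add_re, Complex.add_im, Complex.sub_re, Complex.sub_im,
        Complex.mul_re, Complex.mul_im, Complex.ofReal_re, Complex.ofReal_im] at hre him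
      by_contra hxge
      push_neg at hxge
      rcases eq_or_ne lam.im 0 with hy0 | hy0
      · rw [hy0] at hre
        nlinarith
      · have hfac : lam.im * (2 * lam.re + (2 * γ - α)) = 0 := by linear_combination him
        rcases mul_eq_zero.mp hfac with h1 | h1
        · exact hy0 h1
        · linarith
  · intro hlt
    have h2 : 0 < α + τ := by
      rw [hτc, div_lt_iff₀ hm] at hlt
      rw [hsum, sub_pos, lt_div_iff₀ hm1]
      nlinarith
    obtain ⟨lam, hl, he⟩ := hposroot (2 * γ - α) (-(2 * γ * (α + τ))) (by nlinarith)
    exact ⟨lam, hl, by linarith [he]⟩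
end

section
/- Let n₁, n₂ be positive integers with n₂ > n₁, and N₁, N₂ positive integers, with moments over population N = N₁+N₂: n = (n₁N₁+n₂N₂)/N, ⟨n²⟩ = (n₁²N₁+n₂²N₂)/N. Define V = 2n₁²N₁²(n₁−1)² + 2n₂²N₂²(n₂−1)² + N₁N₂n₁n₂(n₁−2)² + N₁N₂n₁n₂²(3n₁−4). If either n₁ ≥ 2, or (n₁ = 1 and n₂N₂ ≥ N₁), then V ≥ 0. -/
theorem V_nonneg
    (n₁ n₂ N₁ N₂ : ℕ)
    (hn₁ : 1 ≤ n₁) (hn₁₂ : n₁ < n₂)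
    (hN₁ : 0 < N₁) (hN₂ : 0 < N₂)
    (V : ℝ)
    (hV : V = 2 * (n₁:ℝ) ^ 2 * (N₁:ℝ) ^ 2 * ((n₁:ℝ) - 1) ^ 2
      + 2 * (n₂:ℝ) ^ 2 * (N₂:ℝ) ^ 2 * ((n₂:ℝ) - 1) ^ 2
      + (N₁:ℝ) * (N₂:ℝ) * (n₁:ℝ) * (n₂:ℝ) * ((n₁:ℝ) - 2) ^ 2
      + (N₁:ℝ) * (N₂:ℝ) * (n₁:ℝ) * (n₂:ℝ) ^ 2 * (3 * (n₁:ℝ) - 4))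
    (hcase : 2 ≤ n₁ ∨ (n₁ = 1 ∧ N₁ ≤ n₂ * N₂)) :
    0 ≤ V := by
  subst hV
  have hN₁' : (1:ℝ) ≤ N₁ := by exact_mod_cast hN₁
  have hN₂' : (1:ℝ) ≤ N₂ := by exact_mod_cast hN₂
  rcases hcase with h2 | ⟨h1, hle⟩
  · have h2' : (2:ℝ) ≤ n₁ := by exact_mod_cast h2
    have : (0:ℝ) ≤ 3 * (n₁:ℝ) - 4 := by linarith
    positivity
  · subst h1
    have h2' : (2:ℝ) ≤ n₂ := by exact_mod_cast hn₁₂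
    have hle' : (N₁:ℝ) ≤ n₂ * N₂ := by exact_mod_cast hle
    push_cast
    have hA : (N₁:ℝ)*((N₂:ℝ)*n₂*((n₂:ℝ)-1)) ≤ ((n₂:ℝ)*N₂)*((N₂:ℝ)*n₂*((n₂:ℝ)-1)) :=
      mul_le_mul_of_nonneg_right hle' (by nlinarith)
    have hB : (0:ℝ) ≤ (n₂:ℝ)^2*(N₂:ℝ)^2*((n₂:ℝ)-1)*(2*((n₂:ℝ)-1)-1) := by
      have : (0:ℝ) ≤ (n₂:ℝ)^2*(N₂:ℝ)^2*((n₂:ℝ)-1) :=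
        mul_nonneg (by positivity) (by linarith)
      nlinarith
    nlinarith [hA, hB]
end
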